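/- Let M = (Q, A, E, q₀, F) be an NFA with total transition relation and |Q| > 1, let [·] : Q → D^m be a factor-decodable code of length m ≥ 2, and let L' ⊆ (A×D)^+ be the 2m-slt language defined by the sets I_{2m−1}, F_{2m}, T_{2m−1} of the path-encoding construction. Then α(L') ⊆ L(M), and every word w ∈ L(M) with |w| ≥ 3m belongs to α(L'); consequently, taking L'' = {w ∈ L(M) : |w| < 3m} (a finite language), α(L') ∪ L'' = L(M). -/

import Mathlib

/-- A (nonempty) path of the NFA with transition relation `E`: a nonempty list of
transitions, all in `E`, which are pairwise consecutive. -/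
def IsPath {Q A : Type} (E : Set (Q × A × Q)) (η : List (Q × A × Q)) : Prop :=
  η ≠ [] ∧ (∀ e ∈ η, e ∈ E) ∧ List.Chain' (fun e f => e.2.2 = f.1) η

/-- The origin of a path (as an `Option`, `none` for the empty path). -/
def origState {Q A : Type} (η : List (Q × A × Q)) : Option Q := η.head?.map (fun e => e.1)

/-- The end of a path (as an `Option`, `none` for the empty path). -/
def endState {Q A : Type} (η : List (Q × A × Q)) : Option Q := η.getLast?.map (fun e => e.2.2)

/-- The label of a path. -/
def pathLabel {Q A : Type} (η : List (Q × A × Q)) : List A := η.map (fun e => e.2.1)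

/-- The language of the NFA `(Q, A, E, q₀, F)`: labels of paths from `q₀` to a
final state. -/
def nfaLang {Q A : Type} (E : Set (Q × A × Q)) (q0 : Q) (F : Set Q) : Set (List A) :=
  {w | ∃ η, IsPath E η ∧ origState η = some q0 ∧ (∃ q ∈ F, endState η = some q) ∧
    w = pathLabel η}

/-- The transition relation `E` is total. -/
def TotalRel {Q A : Type} (E : Set (Q × A × Q)) : Prop := ∀ q a, ∃ p, (q, a, p) ∈ E

/-- A code of `Q` into `D` of length `m`: an injective map sending each state to
a word of length `m`. -/
def IsCode {Q D : Type} (m : ℕ) (c : Q → List D) : Prop :=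
  Function.Injective c ∧ ∀ q, (c q).length = m

/-- A word `x ∈ D^{2m-1}` is factor-decodable: there is exactly one position `j`,
`1 ≤ j ≤ m`, such that the factor of `x` of length `m` starting at position `j`
is a codeword. -/
def FactorDecodableWord {Q D : Type} (m : ℕ) (c : Q → List D) (x : List D) : Prop :=
  ∃! j : ℕ, 1 ≤ j ∧ j ≤ m ∧ ∃ q : Q, (x.drop (j - 1)).take m = c q

/-- The code `c` is factor-decodable: every factor of length `2m-1` of every
concatenation of codewords is factor-decodable. -/
def IsFactorDecodableCode {Q D : Type} (m : ℕ) (c : Q → List D) : Prop :=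
  IsCode m c ∧
  ∀ l : List Q, l ≠ [] → ∀ x : List D, x.length = 2 * m - 1 →
    x <:+: (l.map c).flatten → FactorDecodableWord m c x

/-- Encoding of a path `η` of length `≤ m`: the unique word `z ∈ (A × D)^{|η|}`
whose `A`-projection is the label of `η` and whose `D`-projection is the prefix
of length `|η|` of the codeword of the origin of `η` (the empty path encodes to
the empty word). -/
def encShort {Q A D : Type} (c : Q → List D) : List (Q × A × Q) → List (A × D)
  | [] => []
  | e :: t => (pathLabel (e :: t)).zip (c e.1)

/-- Encoding `[η]` of an arbitrary path `η`, obtained by encoding blockwise the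
canonical decomposition of `η` into consecutive `m`-paths followed by one final
path of length `< m`. -/
def encPath {Q A D : Type} (c : Q → List D) (m : ℕ) (η : List (Q × A × Q)) :
    List (A × D) :=
  if h : η.length ≤ m ∨ m = 0 then encShort c η
  else encShort c (η.take m) ++ encPath c m (η.drop m)
termination_by η.length
decreasing_by
  push_neg at h
  simp only [List.length_drop]
  omega

/-- The set `F_{2m}` of the path-encoding construction: all factors of length
`2m` of the encodings `[η'η''η''']` of three consecutive `m`-paths. -/
def Fset {Q A D : Type} (E : Set (Q × A × Q)) (c : Q → List D) (m : ℕ) :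
    Set (List (A × D)) :=
  {w | ∃ η₁ η₂ η₃ : List (Q × A × Q),
    IsPath E (η₁ ++ η₂ ++ η₃) ∧ η₁.length = m ∧ η₂.length = m ∧ η₃.length = m ∧
    w.length = 2 * m ∧ w <:+: encPath c m (η₁ ++ η₂ ++ η₃)}

/-- The set `I_{2m-1}` of the path-encoding construction: prefixes of length
`2m-1` of the encodings `[η'η'']` of two consecutive `m`-paths with
`δ([η']) = [q₀]`. -/
def Iset {Q A D : Type} (E : Set (Q × A × Q)) (q0 : Q) (c : Q → List D) (m : ℕ) :
    Set (List (A × D)) :=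
  {w | ∃ η₁ η₂ : List (Q × A × Q),
    IsPath E (η₁ ++ η₂) ∧ η₁.length = m ∧ η₂.length = m ∧
    (encPath c m η₁).map Prod.snd = c q0 ∧
    w = (encPath c m (η₁ ++ η₂)).take (2 * m - 1)}

/-- The set `T_{2m-1}` of the path-encoding construction: suffixes of length
`2m-1` of the encodings `[η'η''η''']` of consecutive paths with `|η'| = |η''| = m`,
`0 ≤ |η'''| < m` and `e(η''η''') ∈ F`. -/
def Tset {Q A D : Type} (E : Set (Q × A × Q)) (F : Set Q) (c : Q → List D) (m : ℕ) :
    Set (List (A × D)) :=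
  {w | ∃ η₁ η₂ η₃ : List (Q × A × Q),
    IsPath E (η₁ ++ η₂ ++ η₃) ∧ η₁.length = m ∧ η₂.length = m ∧ η₃.length < m ∧
    (∃ q ∈ F, endState (η₂ ++ η₃) = some q) ∧
    w = (encPath c m (η₁ ++ η₂ ++ η₃)).drop
      ((encPath c m (η₁ ++ η₂ ++ η₃)).length - (2 * m - 1))}

/-- The `2m`-slt language `L'` over `A × D` determined by the sets `I_{2m-1}`,
`T_{2m-1}`, `F_{2m}`: words `z` of length `≥ 2m` whose prefix of length `2m-1`
is in `I_{2m-1}`, whose suffix of length `2m-1` is in `T_{2m-1}`, and all of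
whose factors of length `2m` are in `F_{2m}`. -/
def Lp {Q A D : Type} (E : Set (Q × A × Q)) (q0 : Q) (F : Set Q)
    (c : Q → List D) (m : ℕ) : Set (List (A × D)) :=
  {z | 2 * m ≤ z.length ∧ z.take (2 * m - 1) ∈ Iset E q0 c m ∧
    z.drop (z.length - (2 * m - 1)) ∈ Tset E F c m ∧
    ∀ y : List (A × D), y.length = 2 * m → y <:+: z → y ∈ Fset E c m}

section
variable {Q A D : Type}

lemma pathLabel_length (η : List (Q × A × Q)) : (pathLabel η).length = η.length :=
  List.length_map _

lemma pathLabel_append (σ τ : List (Q × A × Q)) :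
    pathLabel (σ ++ τ) = pathLabel σ ++ pathLabel τ := List.map_append

lemma pathLabel_take (η : List (Q × A × Q)) (t : ℕ) :
    pathLabel (η.take t) = (pathLabel η).take t := List.map_take

lemma pathLabel_drop (η : List (Q × A × Q)) (t : ℕ) :
    pathLabel (η.drop t) = (pathLabel η).drop t := List.map_drop

lemma origState_append {σ : List (Q × A × Q)} (τ : List (Q × A × Q)) (h : σ ≠ []) :
    origState (σ ++ τ) = origState σ := by
  cases σ with
  | nil => simp at h
  | cons e t => simp [origState]

lemma endState_append (σ : List (Q × A × Q)) {τ : List (Q × A × Q)} (h : τ ≠ [])  :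
    endState (σ ++ τ) = endState τ := by
  simp only [endState, List.getLast?_append]
  cases τ with
  | nil => simp at h
  | cons e t => rw [List.getLast?_cons, Option.or_of_isSome] <;> simp [List.getLast?_isSome]

end
section
variable {Q A D : Type} {E : Set (Q × A × Q)}

lemma isPath_append_iff {σ τ : List (Q × A × Q)} (hσ : σ ≠ []) (hτ : τ ≠ []) :
    IsPath E (σ ++ τ) ↔ IsPath E σ ∧ IsPath E τ ∧ endState σ = origState τ := by
  obtain ⟨e, σ', rfl⟩ := List.exists_cons_of_ne_nil hσ
  obtain ⟨f, τ', rfl⟩ := List.exists_cons_of_ne_nil hτ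
  constructor
  · rintro ⟨-, hmem, hch⟩
    change List.IsChain _ _ at hch
    rw [List.isChain_append] at hch
    refine ⟨⟨by simp, fun x hx => hmem x (List.mem_append.2 (Or.inl hx)), hch.1⟩,
      ⟨by simp, fun x hx => hmem x (List.mem_append.2 (Or.inr hx)), hch.2.1⟩, ?_⟩
    have := hch.2.2 ((e :: σ').getLast (by simp))
      (by rw [List.getLast?_eq_getLast (by simp)]; rfl) f rfl
    simp [endState, origState, List.getLast?_eq_getLast (by simp : e :: σ' ≠ []), this]
  · rintro ⟨⟨-, hm1, hc1⟩, ⟨-, hm2, hc2⟩, hend⟩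
    refine ⟨by simp, fun x hx => ?_, ?_⟩
    · rcases List.mem_append.1 hx with h | h
      exacts [hm1 x h, hm2 x h]
    change List.IsChain _ _
    rw [List.isChain_append]
    refine ⟨hc1, hc2, fun x hx y hy => ?_⟩
    simp only [endState, origState] at hend
    rw [hx] at hend
    simp only [List.head?_cons] at hend
    cases hy
    simpa using hend

lemma IsPath.left {σ τ : List (Q × A × Q)} (h : IsPath E (σ ++ τ)) (hσ : σ ≠ []) :
    IsPath E σ := by
  rcases eq_or_ne τ [] with rfl | hτ
  · simpa using h
  · exact ((isPath_append_iff hσ hτ).1 h).1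

lemma IsPath.right {σ τ : List (Q × A × Q)} (h : IsPath E (σ ++ τ)) (hτ : τ ≠ []) :
    IsPath E τ := by
  rcases eq_or_ne σ [] with rfl | hσ
  · simpa using h
  · exact ((isPath_append_iff hσ hτ).1 h).2.1

lemma IsPath.ends {σ τ : List (Q × A × Q)} (h : IsPath E (σ ++ τ)) (hσ : σ ≠ [])
    (hτ : τ ≠ []) : endState σ = origState τ := ((isPath_append_iff hσ hτ).1 h).2.2

lemma IsPath.glue {σ τ : List (Q × A × Q)} (h1 : IsPath E σ) (h2 : IsPath E τ)
    (h : endState σ = origState τ) : IsPath E (σ ++ τ) :=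
  (isPath_append_iff h1.1 h2.1).2 ⟨h1, h2, h⟩

lemma IsPath.infix {σ η : List (Q × A × Q)} (h : IsPath E η) (hi : σ <:+: η)
    (hσ : σ ≠ []) : IsPath E σ := by
  obtain ⟨s, t, rfl⟩ := hi
  exact ((h.left (by simp [hσ])).right hσ : _)

lemma origState_isSome {η : List (Q × A × Q)} (h : η ≠ []) : ∃ q, origState η = some q := by
  cases η with
  | nil => simp at h
  | cons e t => exact ⟨e.1, rfl⟩

lemma endState_isSome {η : List (Q × A × Q)} (h : η ≠ []) : ∃ q, endState η = some q := by
  obtain ⟨t, e, rfl⟩ := List.eq_nil_or_concat' η |>.resolve_left h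
  exact ⟨e.2.2, by simp [endState]⟩

end
section
variable {Q A D : Type} {E : Set (Q × A × Q)} {c : Q → List D} {m : ℕ}

lemma zip_take_right {α β : Type*} : ∀ (l : List α) (t : ℕ) (l' : List β),
    l.length ≤ t → l.zip (l'.take t) = l.zip l'
  | [], _, _, _ => by simp
  | a::l, t+1, [], _ => by simp
  | a::l, t+1, b::l', h => by
      simp only [List.take_succ_cons, List.zip_cons_cons]
      rw [zip_take_right l t l' (by simpa using h)]

lemma encShort_length (hclen : ∀ q, (c q).length = m) {η : List (Q × A × Q)}
    (h : η.length ≤ m) : (encShort c η).length = η.length := by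
  cases η with
  | nil => rfl
  | cons e t =>
      simp only [List.length_cons] at h
      simp [encShort, pathLabel, hclen]
      omega

lemma encShort_map_fst (hclen : ∀ q, (c q).length = m) {η : List (Q × A × Q)}
    (h : η.length ≤ m) : (encShort c η).map Prod.fst = pathLabel η := by
  cases η with
  | nil => rfl
  | cons e t =>
      rw [encShort, List.map_fst_zip]
      rw [pathLabel_length, hclen]; exact h

lemma encShort_map_snd (hclen : ∀ q, (c q).length = m) {e : Q × A × Q}
    {t : List (Q × A × Q)} (h : (e :: t).length ≤ m) :
    (encShort c (e :: t)).map Prod.snd = (c e.1).take (e :: t).length := by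
  rw [encShort, ← zip_take_right (pathLabel (e :: t)) (e :: t).length (c e.1)
    (le_of_eq (pathLabel_length _)), List.map_snd_zip]
  rw [pathLabel_length, List.length_take, hclen]
  exact min_le_left _ _

lemma encShort_take (η : List (Q × A × Q)) (t : ℕ) :
    (encShort c η).take t = encShort c (η.take t) := by
  cases η with
  | nil => simp [encShort]
  | cons e l =>
      cases t with
      | zero => simp [encShort]
      | succ t =>
          rw [encShort, List.zip_eq_zipWith, List.take_zipWith, ← List.zip_eq_zipWith,
            ← pathLabel_take, List.take_succ_cons, encShort]
          exact zip_take_right _ _ _ (by rw [pathLabel_length]; simp)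
end
section
variable {Q A D : Type} {E : Set (Q × A × Q)} {c : Q → List D} {m : ℕ}

lemma encPath_short {η : List (Q × A × Q)} (h : η.length ≤ m) :
    encPath c m η = encShort c η := by
  rw [encPath, dif_pos (Or.inl h)]

lemma encPath_block {σ : List (Q × A × Q)} (τ : List (Q × A × Q)) (hm : 0 < m)
    (hσ : σ.length = m) : encPath c m (σ ++ τ) = encShort c σ ++ encPath c m τ := by
  rcases eq_or_ne τ [] with rfl | hτ
  · simp [encPath_short (le_of_eq hσ), encPath, encShort]
  · rw [encPath, dif_neg]
    · rw [List.take_append_of_le_length (le_of_eq hσ.symm), List.take_of_length_le (le_of_eq hσ),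
        List.drop_append_of_le_length (le_of_eq hσ.symm), List.drop_of_length_le (le_of_eq hσ),
        List.nil_append]
    · push_neg
      constructor
      · simp only [List.length_append, hσ]
        have := List.length_pos_iff.2 hτ
        omega
      · omega
end
section
variable {Q A D : Type} {E : Set (Q × A × Q)} {c : Q → List D} {m : ℕ}

lemma encPath_length (hclen : ∀ q, (c q).length = m) (hm : 0 < m) :
    ∀ η : List (Q × A × Q), (encPath c m η).length = η.length := by
  suffices h : ∀ n (η : List (Q × A × Q)), η.length = n →
      (encPath c m η).length = η.length from fun η => h _ η rfl
  intro n
  induction n using Nat.strong_induction_on with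
  | _ n ih =>
    intro η hη
    by_cases h : η.length ≤ m
    · rw [encPath_short h, encShort_length hclen h]
    · push_neg at h
      conv_lhs => rw [← List.take_append_drop m η]
      rw [encPath_block _ hm (by simp; omega), List.length_append,
        encShort_length hclen (by simp),
        ih (η.drop m).length (by simp; omega) _ rfl]
      simp only [List.length_take, List.length_drop]
      omega

lemma encPath_map_fst (hclen : ∀ q, (c q).length = m) (hm : 0 < m) :
    ∀ η : List (Q × A × Q), (encPath c m η).map Prod.fst = pathLabel η := by
  suffices h : ∀ n (η : List (Q × A × Q)), η.length = n →
      (encPath c m η).map Prod.fst = pathLabel η from fun η => h _ η rfl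
  intro n
  induction n using Nat.strong_induction_on with
  | _ n ih =>
    intro η hη
    by_cases h : η.length ≤ m
    · rw [encPath_short h, encShort_map_fst hclen h]
    · push_neg at h
      conv_lhs => rw [← List.take_append_drop m η]
      rw [encPath_block _ hm (by simp; omega), List.map_append,
        encShort_map_fst hclen (by simp), ih (η.drop m).length (by simp; omega) _ rfl,
        ← pathLabel_append, List.take_append_drop]

lemma encPath_take (hclen : ∀ q, (c q).length = m) (hm : 0 < m) :
    ∀ (η : List (Q × A × Q)) (t : ℕ), (encPath c m η).take t = encPath c m (η.take t) := by
  suffices h : ∀ n (η : List (Q × A × Q)), η.length = n → ∀ t,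
      (encPath c m η).take t = encPath c m (η.take t) from fun η => h _ η rfl
  intro n
  induction n using Nat.strong_induction_on with
  | _ n ih =>
    intro η hη t
    by_cases h : η.length ≤ m
    · rw [encPath_short h, encPath_short (le_trans (by simp) h), encShort_take]
    · push_neg at h
      by_cases ht : t ≤ m
      · conv_lhs => rw [← List.take_append_drop m η]
        rw [encPath_block _ hm (by simp only [List.length_take]; omega),
          List.take_append_of_le_length
          (by rw [encShort_length hclen (by simp only [List.length_take]; omega)]
              simp only [List.length_take]; omega),
          encShort_take, List.take_take, min_eq_left ht,
          encPath_short (by simp only [List.length_take]; omega)]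
      · push_neg at ht
        conv_lhs => rw [← List.take_append_drop m η]
        conv_rhs => rw [← List.take_append_drop m η, List.take_append,
          List.take_of_length_le (show (η.take m).length ≤ t by
            simp only [List.length_take]; omega)]
        rw [encPath_block _ hm (by simp only [List.length_take]; omega),
          encPath_block _ hm (by simp only [List.length_take]; omega),
          List.take_append,
          List.take_of_length_le (show (encShort c (η.take m)).length ≤ t by
            rw [encShort_length hclen (by simp only [List.length_take]; omega)]
            simp only [List.length_take]; omega),
          encShort_length hclen (by simp only [List.length_take]; omega),
          ih (η.drop m).length (by simp only [List.length_drop]; omega) _ rfl]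

lemma encPath_drop_mblock (hclen : ∀ q, (c q).length = m) (hm : 0 < m)
    (η : List (Q × A × Q)) : (encPath c m η).drop m = encPath c m (η.drop m) := by
  by_cases h : η.length ≤ m
  · rw [encPath_short h, List.drop_of_length_le (by rw [encShort_length hclen h]; exact h),
      List.drop_of_length_le h, encPath_short (by simp)]
    rfl
  · push_neg at h
    conv_lhs => rw [← List.take_append_drop m η]
    rw [encPath_block _ hm (by simp only [List.length_take]; omega),
      List.drop_left' (show (encShort c (η.take m)).length = m by
        rw [encShort_length hclen (by simp only [List.length_take]; omega)]
        simp only [List.length_take]; omega)]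

lemma encPath_drop_mul (hclen : ∀ q, (c q).length = m) (hm : 0 < m)
    (η : List (Q × A × Q)) (i : ℕ) :
    (encPath c m η).drop (i * m) = encPath c m (η.drop (i * m)) := by
  induction i generalizing η with
  | zero => simp
  | succ i ih =>
      have h1 : (i + 1) * m = m + i * m := by ring
      rw [h1, ← List.drop_drop, ← List.drop_drop, encPath_drop_mblock hclen hm, ih]
end
section
variable {Q A D : Type} {E : Set (Q × A × Q)} {c : Q → List D} {m : ℕ}

lemma encPath_three (hm : 0 < m) {η₁ η₂ η₃ : List (Q × A × Q)} (h1 : η₁.length = m)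
    (h2 : η₂.length = m) (h3 : η₃.length ≤ m) :
    encPath c m (η₁ ++ η₂ ++ η₃) = encShort c η₁ ++ encShort c η₂ ++ encShort c η₃ := by
  rw [List.append_assoc, encPath_block _ hm h1, encPath_block _ hm h2, encPath_short h3,
    List.append_assoc]

lemma encShort_snd_of_orig (hclen : ∀ q, (c q).length = m) {η : List (Q × A × Q)} {q : Q}
    (h : η.length ≤ m) (ho : origState η = some q) :
    (encShort c η).map Prod.snd = (c q).take η.length := by
  cases η with
  | nil => simp [origState] at ho
  | cons e t =>
      have : e.1 = q := by simpa [origState] using ho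
      rw [encShort_map_snd hclen h, this]

lemma path_extend (hTot : TotalRel E) (a0 : A) {η : List (Q × A × Q)} (hη : IsPath E η) :
    ∀ t, ∃ τ : List (Q × A × Q), τ.length = t ∧ IsPath E (η ++ τ) := by
  intro t
  induction t with
  | zero => exact ⟨[], rfl, by simpa using hη⟩
  | succ t ih =>
      obtain ⟨τ, hlen, hp⟩ := ih
      obtain ⟨q, hq⟩ := endState_isSome (hp.1)
      obtain ⟨p, hp'⟩ := hTot q a0
      refine ⟨τ ++ [(q, a0, p)], by simp [hlen], ?_⟩
      rw [← List.append_assoc]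
      refine hp.glue ⟨by simp, ?_, ?_⟩ ?_
      · intro x hx; simp at hx; subst hx; exact hp'
      · exact List.isChain_singleton _
      · rw [hq]; rfl

lemma drop_take_infix {α : Type*} (l : List α) (i j : ℕ) : (l.drop i).take j <:+: l :=
  ((List.take_prefix _ _).isInfix).trans ((List.drop_suffix  _ _).isInfix)
end
section
variable {Q A D : Type} {E : Set (Q × A × Q)} {c : Q → List D} {m : ℕ}

lemma origState_take {η : List (Q × A × Q)} {t : ℕ} (ht : 1 ≤ t) :
    origState (η.take t) = origState η := by
  cases η with
  | nil => simp
  | cons e l => cases t with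
    | zero => omega
    | succ t => simp [origState]

lemma endState_drop {η : List (Q × A × Q)} {t : ℕ} (ht : t < η.length) :
    endState (η.drop t) = endState η := by
  conv_rhs => rw [← List.take_append_drop t η]
  rw [endState_append]
  intro h
  have := congrArg List.length h
  simp at this
  omega
end
section
variable {Q A D : Type}

lemma drop_take' {α : Type*} (l : List α) (a b : ℕ) :
    (l.take a).drop b = (l.drop b).take (a - b) := by
  rcases le_or_gt b a with h | h
  · have hba : b + (a - b) = a := by omega
    rw [List.take_drop, hba]
  · rw [List.drop_of_length_le (le_trans (by simp) h.le),
      Nat.sub_eq_zero_of_le h.le, List.take_zero]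

lemma completeness_aux (E : Set (Q × A × Q)) (q0 : Q) (F : Set Q)
    (hTot : TotalRel E) (m : ℕ) (hm : 2 ≤ m) (c : Q → List D)
    (hclen : ∀ q, (c q).length = m) :
    ∀ w ∈ nfaLang E q0 F, 3 * m ≤ w.length →
      ∃ z ∈ Lp E q0 F c m, z.map Prod.fst = w := by
  have hm0 : 0 < m := by omega
  rintro w ⟨η, hη, horig, ⟨qf, hqf, hend⟩, rfl⟩ hw
  rw [pathLabel_length] at hw
  set n := η.length with hn
  have hηne : η ≠ [] := hη.1
  obtain ⟨τ, hτlen, hη'⟩ := path_extend hTot (η.head hηne).2.1 hη (4*m)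
  set η' := η ++ τ with hη'def
  have hlen' : η'.length = n + 4*m := by simp [hη'def, hτlen, hn]
  set z := encPath c m η with hzdef
  set z' := encPath c m η' with hz'def
  have hzlen : z.length = n := encPath_length hclen hm0 η
  have hz'len : z'.length = n + 4*m := by rw [hz'def, encPath_length hclen hm0, hlen']
  have hz : z = z'.take n := by
    rw [hz'def, encPath_take hclen hm0, hη'def, List.take_left' rfl]
  refine ⟨z, ⟨by omega, ?_, ?_, ?_⟩, by rw [hzdef, encPath_map_fst hclen hm0]⟩
  · -- Iset
    have h12 : η'.take m ++ (η'.drop m).take m = η'.take (2*m) := by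
      rw [two_mul, List.take_add]
    refine ⟨η'.take m, (η'.drop m).take m,
      ?_, by simp only [List.length_take, hlen']; omega,
      by simp only [List.length_take, List.length_drop, hlen']; omega, ?_, ?_⟩
    · rw [h12]
      exact hη'.infix (List.take_prefix _ _).isInfix
        (List.ne_nil_of_length_pos (by simp only [List.length_take, hlen']; omega))
    · rw [encPath_short (by simp only [List.length_take, hlen']; omega),
        encShort_snd_of_orig hclen (by simp only [List.length_take, hlen']; omega)
          (by rw [origState_take (by omega), hη'def, origState_append _ hηne, horig])]
      rw [show (η'.take m).length = m by simp only [List.length_take, hlen']; omega,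
        ← hclen q0, List.take_length]
    · rw [h12, ← encPath_take hclen hm0, ← hz'def, hz, List.take_take, List.take_take]
      congr 1
      omega
  · -- Tset
    obtain ⟨K, r, hKr, hrm, hK3⟩ : ∃ K r, K * m + r = n ∧ r < m ∧ 3 ≤ K :=
      ⟨n / m, n % m, by rw [mul_comm]; exact Nat.div_add_mod n m, Nat.mod_lt _ hm0,
        by rw [Nat.le_div_iff_mul_le hm0]; omega⟩
    have e1 : (K-1)*m + m = K*m := by
      have h2 : K - 1 + 1 = K := by omega
      conv_rhs => rw [← h2]
      ring
    have e2 : (K-2)*m + m = (K-1)*m := by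
      have h2 : K - 2 + 1 = K - 1 := by omega
      conv_rhs => rw [← h2]
      ring
    set η₂ := (η.drop ((K-1)*m)).take m with hη₂
    set η₃ := η.drop (K*m) with hη₃
    have h23 : η₂ ++ η₃ = η.drop ((K-1)*m) := by
      rw [hη₂, hη₃, show K*m = (K-1)*m + m from e1.symm, ← List.drop_drop,
        List.take_append_drop]
    set η₁ := (η.drop ((K-2)*m)).take m with hη₁
    have h123 : η₁ ++ η₂ ++ η₃ = η.drop ((K-2)*m) := by
      rw [List.append_assoc, h23, hη₁, show (K-1)*m = (K-2)*m + m from e2.symm,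
        ← List.drop_drop, List.take_append_drop]
    refine ⟨η₁, η₂, η₃, ?_,
      by simp only [hη₁, List.length_take, List.length_drop]; omega,
      by simp only [hη₂, List.length_take, List.length_drop]; omega,
      by simp only [hη₃, List.length_drop]; omega,
      ⟨qf, hqf, by rw [h23, endState_drop (by omega)]; exact hend⟩, ?_⟩
    · rw [h123]
      exact hη.infix (List.drop_suffix _ _).isInfix
        (List.ne_nil_of_length_pos (by simp only [List.length_drop]; omega))
    · rw [h123, ← encPath_drop_mul hclen hm0, ← hzdef, List.drop_drop,
        List.length_drop, hzlen]
      congr 1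
      omega
  · -- Fset
    intro y hylen hyz
    obtain ⟨s, t, hst⟩ := hyz
    set p := s.length with hpdef
    have hp : p + 2*m ≤ n := by
      have := congrArg List.length hst
      simp only [List.length_append, hylen, hzlen] at this
      omega
    have hy1 : y = (z.drop p).take (2*m) := by
      rw [← hst, List.append_assoc, hpdef, List.drop_left, List.take_left' hylen]
    have hy2 : y = (z'.drop p).take (2*m) := by
      rw [hy1, hz, drop_take', List.take_take]
      congr 1
      omega
    obtain ⟨i, j, hij, hjm⟩ : ∃ i j, i * m + j = p ∧ j < m :=
      ⟨p / m, p % m, by rw [mul_comm]; exact Nat.div_add_mod p m, Nat.mod_lt _ hm0⟩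
    set σ := (η'.drop (i*m)).take (3*m) with hσ
    have hσlen : σ.length = 3*m := by
      rw [hσ]; simp only [List.length_take, List.length_drop, hlen']; omega
    have h123 : σ.take m ++ (σ.drop m).take m ++ σ.drop (2*m) = σ := by
      rw [List.append_assoc, show (2:ℕ)*m = m + m by ring, ← List.drop_drop,
        List.take_append_drop, List.take_append_drop]
    refine ⟨σ.take m, (σ.drop m).take m, σ.drop (2*m), ?_,
      by simp only [List.length_take, hσlen]; omega,
      by simp only [List.length_take, List.length_drop, hσlen]; omega,
      by simp only [List.length_drop, hσlen]; omega,
      hylen, ?_⟩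
    · rw [h123]
      exact hη'.infix (drop_take_infix _ _ _) (List.ne_nil_of_length_pos (by omega))
    · rw [h123, hσ, ← encPath_take hclen hm0, ← encPath_drop_mul hclen hm0, ← hz'def]
      rw [hy2, show z'.drop p = (z'.drop (i*m)).drop (p - i*m) by
        rw [List.drop_drop]; congr 1; omega]
      rw [show ((z'.drop (i*m)).drop (p - i*m)).take (2*m)
          = (((z'.drop (i*m)).take (3*m)).drop (p - i*m)).take (2*m) by
        rw [drop_take', List.take_take]; congr 1; omega]
      exact drop_take_infix _ _ _
end
section
variable {Q A D : Type} {E : Set (Q × A × Q)} {c : Q → List D} {m : ℕ}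

lemma encShort_snd_full (hclen : ∀ q, (c q).length = m) {η : List (Q × A × Q)} {o : Q}
    (h : η.length = m) (ho : origState η = some o) :
    (encShort c η).map Prod.snd = c o := by
  rw [encShort_snd_of_orig hclen (le_of_eq h) ho, h, ← hclen o, List.take_length]

lemma step_aux (E : Set (Q × A × Q)) (hm : 2 ≤ m) (hinj : Function.Injective c)
    (hclen : ∀ q, (c q).length = m)
    (hfd : ∀ l : List Q, l ≠ [] → ∀ x : List D, x.length = 2 * m - 1 →
      x <:+: (l.map c).flatten → FactorDecodableWord m c x)
    {y : List (A × D)} (hy : y ∈ Fset E c m) (hylen : y.length = 2*m) {q : Q}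
    (hq : (y.map Prod.snd).take m = c q) :
    ∃ q' θ, IsPath E θ ∧ θ.length = m ∧ origState θ = some q ∧ endState θ = some q' ∧
      pathLabel θ = (y.map Prod.fst).take m ∧ (y.map Prod.snd).drop m = c q' := by
  have hm0 : 0 < m := by omega
  obtain ⟨η₁, η₂, η₃, hpath, h1, h2, h3, -, hinf⟩ := hy
  rw [encPath_three hm0 h1 h2 (le_of_eq h3)] at hinf
  obtain ⟨o₁, ho₁⟩ := origState_isSome (show η₁ ≠ [] from
    List.ne_nil_of_length_pos (by omega))
  obtain ⟨o₂, ho₂⟩ := origState_isSome (show η₂ ≠ [] from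
    List.ne_nil_of_length_pos (by omega))
  obtain ⟨o₃, ho₃⟩ := origState_isSome (show η₃ ≠ [] from
    List.ne_nil_of_length_pos (by omega))
  set W := encShort c η₁ ++ encShort c η₂ ++ encShort c η₃ with hW
  have hWlen : W.length = 3*m := by
    rw [hW]
    simp only [List.length_append, encShort_length hclen (le_of_eq h1),
      encShort_length hclen (le_of_eq h2), encShort_length hclen (le_of_eq h3),
      h1, h2, h3]
    ring
  have hWsnd : W.map Prod.snd = c o₁ ++ c o₂ ++ c o₃ := by
    rw [hW]
    simp only [List.map_append]
    rw [encShort_snd_full hclen h1 ho₁, encShort_snd_full hclen h2 ho₂,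
      encShort_snd_full hclen h3 ho₃]
  have hWfst : W.map Prod.fst = pathLabel η₁ ++ pathLabel η₂ ++ pathLabel η₃ := by
    rw [hW]
    simp only [List.map_append]
    rw [encShort_map_fst hclen (le_of_eq h1), encShort_map_fst hclen (le_of_eq h2),
      encShort_map_fst hclen (le_of_eq h3)]
  obtain ⟨s, t, hst⟩ := hinf
  obtain ⟨p, hpdef⟩ : ∃ p, s.length = p := ⟨_, rfl⟩
  have hp : p ≤ m := by
    have := congrArg List.length hst
    simp only [List.length_append, hylen, hWlen] at this
    omega
  have hy1 : y = (W.drop p).take (2*m) := by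
    rw [← hst, List.append_assoc, ← hpdef, List.drop_left, List.take_left' hylen]
  -- the factor-decodable word
  set cc := c o₁ ++ c o₂ ++ c o₃ with hcc
  have hcclen : cc.length = 3*m := by simp [hcc, hclen]; ring
  set x := (y.map Prod.snd).take (2*m - 1) with hx
  have hx2 : x = (cc.drop p).take (2*m - 1) := by
    rw [hx, hy1, List.map_take, List.map_drop, hWsnd, List.take_take,
      min_eq_left (by omega)]
  have hxlen : x.length = 2*m - 1 := by
    rw [hx2]
    simp only [List.length_take, List.length_drop, hcclen]
    omega
  have hxinf : x <:+: ([o₁, o₂, o₃].map c).flatten := by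
    rw [hx2]
    have : ([o₁, o₂, o₃].map c).flatten = cc := by simp [hcc]
    rw [this]
    exact drop_take_infix _ _ _
  obtain ⟨j, hjP, hju⟩ := hfd [o₁, o₂, o₃] (by simp) x hxlen hxinf
  have hP1 : 1 ≤ (1:ℕ) ∧ 1 ≤ m ∧ ∃ q', (x.drop (1-1)).take m = c q' := by
    refine ⟨le_rfl, by omega, q, ?_⟩
    rw [hx, Nat.sub_self, List.drop_zero, List.take_take, min_eq_left (by omega), hq]
  have hccdm : cc.drop m = c o₂ ++ c o₃ := by
    rw [hcc, List.append_assoc, List.drop_left' (hclen o₁)]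
  have hp0m : p = 0 ∨ p = m := by
    rcases Nat.eq_zero_or_pos p with h0 | hppos
    · exact Or.inl h0
    · right
      have hPm : 1 ≤ m - p + 1 ∧ m - p + 1 ≤ m ∧ ∃ q', (x.drop (m-p+1-1)).take m = c q' := by
        refine ⟨by omega, by omega, o₂, ?_⟩
        rw [hx2, Nat.add_sub_cancel, drop_take', List.drop_drop,
          show p + (m - p) = m by omega, hccdm, List.take_take,
          min_eq_left (by omega), List.take_left' (hclen o₂)]
      have e1 := hju 1 hP1
      have e2 := hju (m - p + 1) hPm
      omega
  rcases hp0m with rfl | rfl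
  · -- p = 0 : θ = η₁
    have hy2 : y = encShort c η₁ ++ encShort c η₂ := by
      rw [hy1, List.drop_zero, hW, List.take_left']
      simp only [List.length_append, encShort_length hclen (le_of_eq h1),
        encShort_length hclen (le_of_eq h2), h1, h2]
      ring
    have hsnd : y.map Prod.snd = c o₁ ++ c o₂ := by
      rw [hy2, List.map_append, encShort_snd_full hclen h1 ho₁,
        encShort_snd_full hclen h2 ho₂]
    have ho₁q : o₁ = q := hinj (by
      rw [← hq, hsnd, List.take_left' (hclen o₁)])
    have hpath' : IsPath E (η₁ ++ (η₂ ++ η₃)) := by rwa [← List.append_assoc]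
    refine ⟨o₂, η₁, hpath'.left (List.ne_nil_of_length_pos (by omega)), h1,
      by rw [ho₁, ho₁q], ?_, ?_, ?_⟩
    · rw [hpath'.ends (List.ne_nil_of_length_pos (by omega))
        (List.ne_nil_of_length_pos (by simp; omega)),
        origState_append _ (List.ne_nil_of_length_pos (by omega)), ho₂]
    · rw [hy2, List.map_append, encShort_map_fst hclen (le_of_eq h1),
        encShort_map_fst hclen (le_of_eq h2),
        List.take_left' (by rw [pathLabel_length, h1])]
    · rw [hsnd, List.drop_left' (hclen o₁)]
  · -- p = m : θ = η₂
    have hy2 : y = encShort c η₂ ++ encShort c η₃ := by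
      rw [hy1, hW, List.append_assoc, List.drop_left' (by
        rw [encShort_length hclen (le_of_eq h1), h1]),
        List.take_of_length_le]
      simp only [List.length_append, encShort_length hclen (le_of_eq h2),
        encShort_length hclen (le_of_eq h3), h2, h3]
      omega
    have hsnd : y.map Prod.snd = c o₂ ++ c o₃ := by
      rw [hy2, List.map_append, encShort_snd_full hclen h2 ho₂,
        encShort_snd_full hclen h3 ho₃]
    have ho₂q : o₂ = q := hinj (by
      rw [← hq, hsnd, List.take_left' (hclen o₂)])
    have hpath' : IsPath E (η₂ ++ η₃) :=
      (by rwa [List.append_assoc] at hpath : IsPath E (η₁ ++ (η₂ ++ η₃))).right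
        (List.ne_nil_of_length_pos (by simp; omega))
    refine ⟨o₃, η₂, hpath'.left (List.ne_nil_of_length_pos (by omega)), h2,
      by rw [ho₂, ho₂q], ?_, ?_, ?_⟩
    · rw [hpath'.ends (List.ne_nil_of_length_pos (by omega))
        (List.ne_nil_of_length_pos (by omega)), ho₃]
    · rw [hy2, List.map_append, encShort_map_fst hclen (le_of_eq h2),
        encShort_map_fst hclen (le_of_eq h3),
        List.take_left' (by rw [pathLabel_length, h2])]
    · rw [hsnd, List.drop_left' (hclen o₂)]
end
section
variable {Q A D : Type} {c : Q → List D} {m : ℕ}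

lemma tail_aux (E : Set (Q × A × Q)) (F : Set Q) (hm : 2 ≤ m)
    (hinj : Function.Injective c) (hclen : ∀ q, (c q).length = m)
    (hfd : ∀ l : List Q, l ≠ [] → ∀ x : List D, x.length = 2 * m - 1 →
      x <:+: (l.map c).flatten → FactorDecodableWord m c x)
    {z : List (A × D)} {K r : ℕ}
    (hKr : K * m + r = z.length) (hrm : r < m) (hK2 : 2 ≤ K)
    (ht : z.drop (z.length - (2*m-1)) ∈ Tset E F c m)
    {qK : Q} (hqK : ((z.map Prod.snd).drop ((K-1)*m)).take m = c qK) :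
    ∃ θ qf, IsPath E θ ∧ origState θ = some qK ∧ qf ∈ F ∧ endState θ = some qf ∧
      pathLabel θ = (z.map Prod.fst).drop ((K-1)*m) := by
  have hm0 : 0 < m := by omega
  have e1 : (K-1)*m + m = K*m := by
    have h2 : K - 1 + 1 = K := by omega
    conv_rhs => rw [← h2]
    ring
  have e2 : (K-2)*m + m = (K-1)*m := by
    have h2 : K - 2 + 1 = K - 1 := by omega
    conv_rhs => rw [← h2]
    ring
  have eKm : 2*m ≤ K*m := Nat.mul_le_mul_right m hK2
  obtain ⟨η₁, η₂, η₃, hpath, h1, h2, h3, ⟨qf, hqf, hendF⟩, heq⟩ := ht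
  obtain ⟨j, hj⟩ : ∃ j, η₃.length = j := ⟨_, rfl⟩
  have hjm : j < m := by rw [← hj]; exact h3
  set W := encPath c m (η₁ ++ η₂ ++ η₃) with hWdef
  have hWform : W = encShort c η₁ ++ encShort c η₂ ++ encShort c η₃ :=
    encPath_three hm0 h1 h2 (le_of_lt h3)
  have hWlen : W.length = 2*m + j := by
    rw [hWform]
    simp only [List.length_append, encShort_length hclen (le_of_eq h1),
      encShort_length hclen (le_of_eq h2), encShort_length hclen (le_of_lt h3),
      h1, h2, hj]
    ring
  obtain ⟨o₁, ho₁⟩ := origState_isSome (show η₁ ≠ [] from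
    List.ne_nil_of_length_pos (by omega))
  obtain ⟨o₂, ho₂⟩ := origState_isSome (show η₂ ≠ [] from
    List.ne_nil_of_length_pos (by omega))
  set u := (encShort c η₃).map Prod.snd with hu
  have hulen : u.length = j := by
    rw [hu, List.length_map, encShort_length hclen (le_of_lt h3), hj]
  obtain ⟨o₃, ho₃⟩ : ∃ o₃, u <+: c o₃ := by
    rcases eq_or_ne η₃ [] with rfl | hne
    · exact ⟨o₂, by simp [hu, encShort]⟩
    · obtain ⟨o₃, ho₃⟩ := origState_isSome hne
      refine ⟨o₃, ?_⟩
      rw [hu, encShort_snd_of_orig hclen (le_of_lt h3) ho₃]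
      exact List.take_prefix _ _
  have hWsnd : W.map Prod.snd = c o₁ ++ c o₂ ++ u := by
    rw [hWform]
    simp only [List.map_append]
    rw [encShort_snd_full hclen h1 ho₁, encShort_snd_full hclen h2 ho₂]
  have hWfst : W.map Prod.fst = pathLabel η₁ ++ pathLabel η₂ ++ pathLabel η₃ := by
    rw [hWform]
    simp only [List.map_append]
    rw [encShort_map_fst hclen (le_of_eq h1), encShort_map_fst hclen (le_of_eq h2),
      encShort_map_fst hclen (le_of_lt h3)]
  set s' := z.drop (z.length - (2*m-1)) with hs'
  have hdropW : W.length - (2*m-1) = j + 1 := by omega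
  have heq' : s' = W.drop (j+1) := by rw [heq, hdropW]
  have hzlarge : 2*m ≤ z.length := by omega
  have hs'idx : z.length - (2*m-1) = (K-2)*m + r + 1 := by omega
  -- the factor-decodable word
  set x := s'.map Prod.snd with hx
  have hxW : x = (c o₁ ++ c o₂ ++ u).drop (j+1) := by
    rw [hx, heq', List.map_drop, hWsnd]
  have hxz : x = (z.map Prod.snd).drop ((K-2)*m + r + 1) := by
    rw [hx, hs', List.map_drop, hs'idx]
  have hxlen : x.length = 2*m - 1 := by
    rw [hxW]
    simp only [List.length_drop, List.length_append, hclen, hulen]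
    omega
  have hxinf : x <:+: ([o₁, o₂, o₃].map c).flatten := by
    obtain ⟨v, hv⟩ := ho₃
    have : ([o₁, o₂, o₃].map c).flatten = (c o₁ ++ c o₂ ++ u) ++ v := by
      simp only [List.map_cons, List.map_nil, List.flatten_cons, List.flatten_nil,
        List.append_nil, ← hv]
      simp [List.append_assoc]
    rw [this, hxW]
    exact ((List.drop_suffix _ _).isInfix).trans (List.prefix_append _ _).isInfix
  obtain ⟨j', hj'P, hj'u⟩ := hfd [o₁, o₂, o₃] (by simp) x hxlen hxinf
  have hccdm : (c o₁ ++ c o₂ ++ u).drop m = c o₂ ++ u := by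
    rw [List.append_assoc, List.drop_left' (hclen o₁)]
  have hPB : 1 ≤ m - j ∧ m - j ≤ m ∧ ∃ q', (x.drop (m-j-1)).take m = c q' := by
    refine ⟨by omega, by omega, o₂, ?_⟩
    rw [hxW, List.drop_drop, show j + 1 + (m - j - 1) = m by omega, hccdm,
      List.take_left' (hclen o₂)]
  have hPA : 1 ≤ m - r ∧ m - r ≤ m ∧ ∃ q', (x.drop (m-r-1)).take m = c q' := by
    refine ⟨by omega, by omega, qK, ?_⟩
    rw [hxz, List.drop_drop, show (K-2)*m + r + 1 + (m - r - 1) = (K-1)*m by omega, hqK]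
  have hjr : j = r := by
    have eB := hj'u (m - j) hPB
    have eA := hj'u (m - r) hPA
    omega
  have ho₂qK : o₂ = qK := by
    apply hinj
    obtain ⟨-, -, -⟩ := hPB
    have hB : (x.drop (m-j-1)).take m = c o₂ := by
      rw [hxW, List.drop_drop, show j + 1 + (m - j - 1) = m by omega, hccdm,
        List.take_left' (hclen o₂)]
    have hA : (x.drop (m-r-1)).take m = c qK := by
      rw [hxz, List.drop_drop, show (K-2)*m + r + 1 + (m - r - 1) = (K-1)*m by omega, hqK]
    rw [← hB, hjr, hA]
  have hpath' : IsPath E (η₁ ++ (η₂ ++ η₃)) := by rwa [List.append_assoc] at hpath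
  have hθne : η₂ ++ η₃ ≠ [] := by
    intro h
    have := congrArg List.length h
    simp [h2] at this
    omega
  refine ⟨η₂ ++ η₃, qf, hpath'.right hθne,
    by rw [origState_append _ (List.ne_nil_of_length_pos (by omega)), ho₂, ho₂qK],
    hqf, hendF, ?_⟩
  -- labels
  have hfstW : s'.map Prod.fst = (pathLabel η₁).drop (j+1) ++ pathLabel (η₂ ++ η₃) := by
    rw [heq', List.map_drop, hWfst, List.append_assoc, List.drop_append_of_le_length
      (by rw [pathLabel_length, h1]; omega), pathLabel_append]
  have hfstz : s'.map Prod.fst = (z.map Prod.fst).drop ((K-2)*m + r + 1) := by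
    rw [hs', List.map_drop, hs'idx]
  have hlab1 : (pathLabel η₁).length - (j+1) = m - r - 1 := by
    rw [pathLabel_length, h1]; omega
  have := congrArg (List.drop (m - r - 1)) (hfstW.symm.trans hfstz)
  rwa [List.drop_append_of_le_length (by simp only [List.length_drop]; rw [hlab1]),
    List.drop_of_length_le (by simp only [List.length_drop]; rw [pathLabel_length, h1]; omega),
    List.nil_append, List.drop_drop,
    show (K-2)*m + r + 1 + (m - r - 1) = (K-1)*m by omega] at this
end
section
variable {Q A D : Type} {c : Q → List D} {m : ℕ}

lemma iset_aux (E : Set (Q × A × Q)) (q0 : Q) (hm : 2 ≤ m)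
    (hclen : ∀ q, (c q).length = m) {z : List (A × D)}
    (hI : z.take (2*m-1) ∈ Iset E q0 c m) :
    (z.map Prod.snd).take m = c q0 := by
  have hm0 : 0 < m := by omega
  obtain ⟨η₁, η₂, hpath, h1, h2, hq0, heq⟩ := hI
  have hW : encPath c m (η₁ ++ η₂) = encShort c η₁ ++ encShort c η₂ := by
    rw [encPath_block _ hm0 h1, encPath_short (le_of_eq h2)]
  rw [encPath_short (le_of_eq h1)] at hq0
  have step1 : (z.map Prod.snd).take m = ((z.take (2*m-1)).map Prod.snd).take m := by
    rw [List.map_take, List.take_take, min_eq_left (by omega)]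
  rw [step1, heq, hW, List.map_take, List.map_append, hq0, List.take_take,
    min_eq_left (by omega), List.take_left' (hclen q0)]

lemma soundness_aux (E : Set (Q × A × Q)) (q0 : Q) (F : Set Q) (hm : 2 ≤ m)
    (hinj : Function.Injective c) (hclen : ∀ q, (c q).length = m)
    (hfd : ∀ l : List Q, l ≠ [] → ∀ x : List D, x.length = 2 * m - 1 →
      x <:+: (l.map c).flatten → FactorDecodableWord m c x) :
    ∀ z ∈ Lp E q0 F c m, z.map Prod.fst ∈ nfaLang E q0 F := by
  have hm0 : 0 < m := by omega
  rintro z ⟨hzlen, hI, hT, hF⟩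
  obtain ⟨K, r, hKr, hrm, hK2⟩ : ∃ K r, K * m + r = z.length ∧ r < m ∧ 2 ≤ K :=
    ⟨z.length / m, z.length % m, by rw [mul_comm]; exact Nat.div_add_mod _ m,
      Nat.mod_lt _ hm0, by rw [Nat.le_div_iff_mul_le hm0]; omega⟩
  have hblock0 : (z.map Prod.snd).take m = c q0 := iset_aux E q0 hm hclen hI
  -- one synchronization step
  have hstep : ∀ k q, k + 2 ≤ K → ((z.map Prod.snd).drop (k*m)).take m = c q →
      ∃ q' θ, IsPath E θ ∧ θ.length = m ∧ origState θ = some q ∧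
        endState θ = some q' ∧ pathLabel θ = ((z.map Prod.fst).drop (k*m)).take m ∧
        ((z.map Prod.snd).drop ((k+1)*m)).take m = c q' := by
    intro k q hk hq
    have hkm : k*m + 2*m ≤ z.length := by
      have h' : (k+2)*m ≤ K*m := Nat.mul_le_mul_right m hk
      have hh : (k+2)*m = k*m + 2*m := by ring
      omega
    set y := (z.drop (k*m)).take (2*m) with hy
    have hylen : y.length = 2*m := by
      rw [hy]; simp only [List.length_take, List.length_drop]; omega
    have hyF : y ∈ Fset E c m := hF y hylen (drop_take_infix _ _ _)
    have hyq : (y.map Prod.snd).take m = c q := by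
      rw [hy, List.map_take, List.map_drop, List.take_take, min_eq_left (by omega)]
      exact hq
    obtain ⟨q', θ, hθp, hθlen, hθo, hθe, hθlab, hθnext⟩ :=
      step_aux E hm hinj hclen hfd hyF hylen hyq
    refine ⟨q', θ, hθp, hθlen, hθo, hθe, ?_, ?_⟩
    · rw [hθlab, hy, List.map_take, List.map_drop, List.take_take,
        min_eq_left (by omega)]
    · rw [hy, List.map_take, List.map_drop, drop_take', List.drop_drop] at hθnext
      rw [show k*m + m = (k+1)*m by ring, show 2*m - m = m by omega] at hθnext
      exact hθnext
  -- iterated synchronization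
  have hblocks : ∀ k, k + 2 ≤ K →
      ∃ π q, IsPath E π ∧ origState π = some q0 ∧ endState π = some q ∧
        pathLabel π = (z.map Prod.fst).take ((k+1)*m) ∧
        ((z.map Prod.snd).drop ((k+1)*m)).take m = c q := by
    intro k
    induction k with
    | zero =>
        intro hk
        obtain ⟨q', θ, hθp, hθlen, hθo, hθe, hθlab, hθnext⟩ :=
          hstep 0 q0 hk (by rw [Nat.zero_mul, List.drop_zero]; exact hblock0)
        refine ⟨θ, q', hθp, hθo, hθe, ?_, hθnext⟩
        rw [hθlab, Nat.zero_mul, List.drop_zero, Nat.one_mul]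
    | succ k ih =>
        intro hk
        obtain ⟨π, q, hπp, hπo, hπe, hπlab, hπnext⟩ := ih (by omega)
        obtain ⟨q', θ, hθp, hθlen, hθo, hθe, hθlab, hθnext⟩ :=
          hstep (k+1) q hk hπnext
        refine ⟨π ++ θ, q', hπp.glue hθp (by rw [hπe, hθo]), ?_, ?_, ?_, ?_⟩
        · rw [origState_append _ hπp.1, hπo]
        · rw [endState_append _ hθp.1, hθe]
        · rw [pathLabel_append, hπlab, hθlab, ← List.take_add]
          congr 1
          ring
        · rw [show k+1+1 = k+2 from rfl] at hθnext
          exact hθnext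
  -- assemble with the tail
  obtain ⟨π, q, hπp, hπo, hπe, hπlab, hπnext⟩ := hblocks (K-2) (by omega)
  have hK21 : K - 2 + 1 = K - 1 := by omega
  rw [hK21] at hπlab hπnext
  obtain ⟨θ, qf, hθp, hθo, hqf, hθe, hθlab⟩ :=
    tail_aux E F hm hinj hclen hfd hKr hrm hK2 hT hπnext
  refine ⟨π ++ θ, hπp.glue hθp (by rw [hπe, hθo]), ?_, ⟨qf, hqf, ?_⟩, ?_⟩
  · rw [origState_append _ hπp.1, hπo]
  · rw [endState_append _ hθp.1, hθe]
  · rw [pathLabel_append, hπlab, hθlab, List.take_append_drop]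
end
/-- For the `2m`-slt language `L'` of the path-encoding
construction (with a factor-decodable code), `α(L') ⊆ L(M)`, every word of
`L(M)` of length `≥ 3m` is in `α(L')`, and hence `α(L') ∪ L'' = L(M)` where
`L''` is the finite language of words of `L(M)` of length `< 3m`. -/
theorem encoding_lang_eq {Q A D : Type} [Fintype Q] [Fintype A]
    (E : Set (Q × A × Q)) (q0 : Q) (F : Set Q) (hq0 : q0 ∉ F)
    (hTot : TotalRel E) (hn : 1 < Fintype.card Q)
    (m : ℕ) (hm : 2 ≤ m) (c : Q → List D) (hc : IsFactorDecodableCode m c) :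
    (List.map (Prod.fst : A × D → A)) '' Lp E q0 F c m ⊆ nfaLang E q0 F ∧
    (∀ w ∈ nfaLang E q0 F, 3 * m ≤ w.length →
      w ∈ (List.map (Prod.fst : A × D → A)) '' Lp E q0 F c m) ∧
    {w ∈ nfaLang E q0 F | w.length < 3 * m}.Finite ∧
    (List.map (Prod.fst : A × D → A)) '' Lp E q0 F c m ∪
      {w ∈ nfaLang E q0 F | w.length < 3 * m} = nfaLang E q0 F := by
  obtain ⟨⟨hinj, hclen⟩, hfd⟩ := hc
  have hsound : (List.map (Prod.fst : A × D → A)) '' Lp E q0 F c m ⊆ nfaLang E q0 F := by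
    rintro w ⟨z, hz, rfl⟩
    exact soundness_aux E q0 F hm hinj hclen hfd z hz
  have hcompl : ∀ w ∈ nfaLang E q0 F, 3 * m ≤ w.length →
      w ∈ (List.map (Prod.fst : A × D → A)) '' Lp E q0 F c m := by
    intro w hw hwl
    obtain ⟨z, hz, hzw⟩ := completeness_aux E q0 F hTot m hm c hclen w hw hwl
    exact ⟨z, hz, hzw⟩
  have hfin : {w ∈ nfaLang E q0 F | w.length < 3 * m}.Finite :=
    (List.finite_length_lt A (3*m)).subset (fun w hw => hw.2)
  refine ⟨hsound, hcompl, hfin, ?_⟩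
  apply Set.eq_of_subset_of_subset
  · rintro w (hw | hw)
    · exact hsound hw
    · exact hw.1
  · intro w hw
    rcases lt_or_ge w.length (3*m) with h | h
    · exact Or.inr ⟨hw, h⟩
    · exact Or.inl (hcompl w hw h)
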